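/- If X is a topological space, μ is a regular cardinal, and every point of X is a T_μ point (T_μ(X) = X), then X is μ-resolvable. -/

import Mathlib

universe u

open Cardinal Set

/-- A space is `κ`-resolvable iff it has `κ` pairwise disjoint dense subsets. -/
def Resolvable (X : Type u) [TopologicalSpace X] (κ : Cardinal.{u}) : Prop :=
  ∃ (ι : Type u) (D : ι → Set X), #ι = κ ∧ (∀ i, Dense (D i)) ∧
    Pairwise (Function.onFun Disjoint D)

/-- `L` is left-separated: it has a well-ordering all of whose initial segments
are closed in the subspace `L`. -/
def LeftSeparated {X : Type u} [TopologicalSpace X] (L : Set X) : Prop :=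
  ∃ r : L → L → Prop, IsWellOrder L r ∧ ∀ x : L, IsClosed {y : L | r y x}

/-- `R` is right-separated: it has a well-ordering all of whose initial segments
are open in the subspace `R`. -/
def RightSeparated {X : Type u} [TopologicalSpace X] (R : Set X) : Prop :=
  ∃ r : R → R → Prop, IsWellOrder R r ∧ ∀ x : R, IsOpen {y : R | r y x}

/-- The dispersion character `Δ(X)`: the minimal cardinality of a nonempty open set. -/
noncomputable def dispersion (X : Type u) [TopologicalSpace X] : Cardinal.{u} :=
  sInf {c | ∃ G : Set X, IsOpen G ∧ G.Nonempty ∧ #G = c}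

/-- `x` is a `T_μ` point of `X`. -/
def IsTPoint (X : Type u) [TopologicalSpace X] (μ : Cardinal.{u}) (x : X) : Prop :=
  ∀ A : Set X, #A < μ → ∃ B : Set X, B ⊆ Aᶜ ∧ #B < μ ∧ x ∈ closure B

section Build
variable {X : Type u}

noncomputable def buildE (μ : Cardinal.{u}) (g : X → Set X → Set X) (x₀ : X) :
    μ.ord.ToType → Set X :=
  WellFoundedLT.fix fun α ih =>
    (fun A => ⋃ y ∈ A, g y A) (insert x₀ (⋃ β : Iio α, ih β β.2))

noncomputable def buildA (μ : Cardinal.{u}) (g : X → Set X → Set X) (x₀ : X)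
    (α : μ.ord.ToType) : Set X :=
  insert x₀ (⋃ β : Iio α, buildE μ g x₀ β)

theorem buildE_eq (μ : Cardinal.{u}) (g : X → Set X → Set X) (x₀ : X) (α : μ.ord.ToType) :
    buildE μ g x₀ α = ⋃ y ∈ buildA μ g x₀ α, g y (buildA μ g x₀ α) := by
  unfold buildE buildA
  exact WellFoundedLT.fix_eq _ α

theorem buildE_subset_buildA (μ : Cardinal.{u}) (g : X → Set X → Set X) (x₀ : X)
    {β α : μ.ord.ToType} (hβ : β < α) : buildE μ g x₀ β ⊆ buildA μ g x₀ α := by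
  refine subset_trans ?_ (subset_insert _ _)
  exact subset_iUnion (fun β' : Iio α => buildE μ g x₀ β') ⟨β, hβ⟩

theorem mem_buildA (μ : Cardinal.{u}) (g : X → Set X → Set X) (x₀ : X) (α : μ.ord.ToType) :
    x₀ ∈ buildA μ g x₀ α := mem_insert _ _

theorem mk_Iic_lt (μ : Cardinal.{u}) (hreg : μ.IsRegular) (b : μ.ord.ToType) : #(Iic b) < μ := by
  rw [← Set.Iio_insert]
  refine lt_of_le_of_lt (Cardinal.mk_insert_le) ?_
  exact Cardinal.add_lt_of_lt hreg.aleph0_le (Cardinal.mk_Iio_ord_toType b)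
    (one_lt_aleph0.trans_le hreg.aleph0_le)

end Build

theorem key {X : Type u} [TopologicalSpace X] {μ : Cardinal.{u}} (hreg : μ.IsRegular)
    (h : ∀ x : X, IsTPoint X μ x) {U : Set X} (hU : IsOpen U) (hN : U.Nonempty) :
    ∃ Y : Set X, Y ⊆ U ∧ Y.Nonempty ∧ ∃ D : μ.out → Set X,
      (∀ γ, D γ ⊆ Y) ∧ (∀ γ, Y ⊆ closure (D γ)) ∧ Pairwise (Function.onFun Disjoint D) := by
  classical
  obtain ⟨x₀, hx₀⟩ := hN
  -- the localized T_μ selection function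
  have Hg : ∀ p : X × Set X, ∃ B : Set X,
      p.1 ∈ U → #p.2 < μ → B ⊆ U \ p.2 ∧ #B < μ ∧ p.1 ∈ closure B := by
    rintro ⟨y, A⟩
    by_cases hy : y ∈ U ∧ #A < μ
    · obtain ⟨B, hB1, hB2, hB3⟩ := h y A hy.2
      refine ⟨B ∩ U, fun _ _ => ⟨?_, ?_, ?_⟩⟩
      · rintro b ⟨hb, hbU⟩; exact ⟨hbU, hB1 hb⟩
      · exact lt_of_le_of_lt (mk_le_mk_of_subset inter_subset_left) hB2
      · rw [mem_closure_iff] at hB3 ⊢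
        intro o ho hyo
        obtain ⟨z, hz1, hz2⟩ := hB3 (o ∩ U) (ho.inter hU) ⟨hyo, hy.1⟩
        exact ⟨z, hz1.1, hz2, hz1.2⟩
    · exact ⟨∅, fun hyU hA => absurd ⟨hyU, hA⟩ hy⟩
  choose g0 hg0 using Hg
  set g : X → Set X → Set X := fun y A => g0 (y, A) with hg_def
  have hg : ∀ (y : X) (A : Set X), y ∈ U → #A < μ →
      g y A ⊆ U \ A ∧ #(g y A) < μ ∧ y ∈ closure (g y A) := fun y A => hg0 (y, A)
  set E := buildE μ g x₀ with hE_def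
  set A := buildA μ g x₀ with hA_def
  -- main induction
  have main : ∀ α : μ.ord.ToType, (#(A α) < μ ∧ A α ⊆ U) ∧
      (E α ⊆ U \ A α ∧ #(E α) < μ) := by
    intro α
    induction α using WellFoundedLT.induction with
    | ind α IH =>
      have hAcard : #(A α) < μ := by
        rw [hA_def, buildA]
        refine lt_of_le_of_lt (Cardinal.mk_insert_le) ?_
        refine Cardinal.add_lt_of_lt hreg.aleph0_le ?_
          (one_lt_aleph0.trans_le hreg.aleph0_le)
        refine lt_of_le_of_lt mk_iUnion_le_sum_mk ?_
        exact Cardinal.sum_lt_of_isRegular hreg (Cardinal.mk_Iio_ord_toType α)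
          fun β => (IH β β.2).2.2
      have hAU : A α ⊆ U := by
        rw [hA_def, buildA]
        refine insert_subset hx₀ (iUnion_subset fun β => ?_)
        exact ((IH β β.2).2.1).trans diff_subset
      refine ⟨⟨hAcard, hAU⟩, ?_, ?_⟩
      · rw [hE_def, buildE_eq]
        exact iUnion₂_subset fun y hy => (hg y (A α) (hAU hy) hAcard).1
      · rw [hE_def, buildE_eq]
        rw [biUnion_eq_iUnion]
        refine lt_of_le_of_lt mk_iUnion_le_sum_mk ?_
        exact Cardinal.sum_lt_of_isRegular hreg hAcard
          fun y => (hg y (A α) (hAU y.2) hAcard).2.1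
  -- disjointness of stages
  have hdisj : ∀ {β α : μ.ord.ToType}, β < α → Disjoint (E α) (E β) := by
    intro β α hβα
    rw [Set.disjoint_left]
    intro x hxα hxβ
    have h1 : x ∈ U \ A α := (main α).2.1 hxα
    exact h1.2 (buildE_subset_buildA μ g x₀ hβα hxβ)
  -- the coloring
  have hcard : #(μ.ord.ToType) = μ := Cardinal.mk_ord_toType μ
  have hprod : #(μ.ord.ToType) = #(μ.out × μ.ord.ToType) := by
    rw [Cardinal.mk_prod, Cardinal.lift_id, Cardinal.lift_id, Cardinal.mk_out, hcard,
      Cardinal.mul_eq_self hreg.aleph0_le]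
  obtain ⟨e⟩ := Cardinal.eq.mp hprod
  have hOne : Nonempty (μ.ord.ToType) := by
    rw [← Cardinal.mk_ne_zero_iff, hcard]
    exact hreg.pos.ne'
  have hub : ∀ (γ : μ.out) (b : μ.ord.ToType), ∃ α, b < α ∧ (e α).1 = γ := by
    intro γ b
    by_contra hcon
    push_neg at hcon
    have hmem : ∀ o : μ.ord.ToType, e.symm (γ, o) ∈ Iic b := by
      intro o
      by_contra hle
      refine hcon _ (lt_of_not_ge fun hh => hle (mem_Iic.mpr hh)) ?_
      rw [Equiv.apply_symm_apply]
    have hinj : Function.Injective (fun o : μ.ord.ToType =>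
        (⟨e.symm (γ, o), hmem o⟩ : Iic b)) := by
      intro a1 a2 hab
      have h2 : e.symm (γ, a1) = e.symm (γ, a2) := congrArg Subtype.val hab
      simpa using e.symm.injective h2
    have hle : μ ≤ #(Iic b) := by
      have h4 := Cardinal.mk_le_of_injective hinj
      rwa [hcard] at h4
    exact absurd (mk_Iic_lt μ hreg b) (not_lt.mpr hle)
  -- the dense sets
  refine ⟨insert x₀ (⋃ α, E α), ?_, ⟨x₀, mem_insert _ _⟩,
    fun γ => ⋃ α ∈ {α | (e α).1 = γ}, E α, ?_, ?_, ?_⟩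
  · refine insert_subset hx₀ (iUnion_subset fun α => ?_)
    exact ((main α).2.1).trans diff_subset
  · intro γ
    refine (iUnion₂_subset fun α _ => ?_).trans (subset_insert _ _)
    exact subset_iUnion E α
  · intro γ y hy
    -- find a bound past which y belongs to all A α
    have hbase : ∃ b : μ.ord.ToType, ∀ α, b < α → y ∈ A α := by
      rcases mem_insert_iff.mp hy with heq | hy
      · exact ⟨Classical.choice hOne, fun α _ => heq ▸ mem_buildA μ g x₀ α⟩
      · obtain ⟨β, hβ⟩ := mem_iUnion.mp hy
        exact ⟨β, fun α hα => buildE_subset_buildA μ g x₀ hα hβ⟩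
    obtain ⟨b, hb⟩ := hbase
    obtain ⟨α, hbα, hcol⟩ := hub γ b
    have hyA : y ∈ A α := hb α hbα
    have hyU : y ∈ U := (main α).1.2 hyA
    have hcl : y ∈ closure (g y (A α)) := (hg y (A α) hyU (main α).1.1).2.2
    have hsub1 : g y (A α) ⊆ E α := by
      rw [hE_def, buildE_eq]
      exact subset_biUnion_of_mem (u := fun y' => g y' (buildA μ g x₀ α)) hyA
    have hsub2 : E α ⊆ ⋃ α' ∈ {α' | (e α').1 = γ}, E α' :=
      subset_biUnion_of_mem (u := fun α' => E α') hcol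
    exact closure_mono (hsub1.trans hsub2) hcl
  · intro γ δ hγδ
    rw [Function.onFun, Set.disjoint_left]
    intro x hxγ hxδ
    obtain ⟨α, hα, hxα⟩ := mem_iUnion₂.mp hxγ
    obtain ⟨α', hα', hxα'⟩ := mem_iUnion₂.mp hxδ
    have hne : α ≠ α' := by
      rintro rfl
      exact hγδ (hα ▸ hα')
    rcases hne.lt_or_gt with hlt | hlt
    · exact Set.disjoint_left.mp (hdisj hlt) hxα' hxα
    · exact Set.disjoint_left.mp (hdisj hlt) hxα hxα'

theorem stmt17_aux {X : Type u} [TopologicalSpace X] (μ : Cardinal.{u})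
    (hreg : μ.IsRegular) (h : ∀ x : X, IsTPoint X μ x) :
    ∃ (ι : Type u) (D : ι → Set X), #ι = μ ∧ (∀ i, Dense (D i)) ∧
      Pairwise (Function.onFun Disjoint D) := by
  classical
  set Good : Set X → Prop := fun Y => Y.Nonempty ∧ ∃ D : μ.out → Set X,
    (∀ γ, D γ ⊆ Y) ∧ (∀ γ, Y ⊆ closure (D γ)) ∧ Pairwise (Function.onFun Disjoint D)
    with hGood_def
  set S : Set (Set (Set X)) := {𝒜 | (∀ Y ∈ 𝒜, Good Y) ∧ 𝒜.Pairwise Disjoint} with hS_def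
  have hzorn : ∀ c ⊆ S, IsChain (· ⊆ ·) c → ∃ ub ∈ S, ∀ s ∈ c, s ⊆ ub := by
    intro c hcS hchain
    refine ⟨⋃₀ c, ⟨?_, ?_⟩, fun s hs => subset_sUnion_of_mem hs⟩
    · rintro Y ⟨a, hac, hYa⟩
      exact (hcS hac).1 Y hYa
    · rintro Y ⟨a, hac, hYa⟩ Z ⟨b, hbc, hZb⟩ hYZ
      rcases eq_or_ne a b with rfl | hab
      · exact (hcS hac).2 hYa hZb hYZ
      · rcases hchain hac hbc hab with hsub | hsub
        · exact (hcS hbc).2 (hsub hYa) hZb hYZ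
        · exact (hcS hac).2 hYa (hsub hZb) hYZ
  obtain ⟨M, hM⟩ := zorn_subset S hzorn
  have hMS : M ∈ S := hM.prop
  -- the union of M is dense
  have hdense : Dense (⋃₀ M) := by
    rw [dense_iff_closure_eq]
    by_contra hne
    have hUopen : IsOpen (closure (⋃₀ M))ᶜ := isOpen_compl_iff.mpr isClosed_closure
    have hUne : (closure (⋃₀ M))ᶜ.Nonempty := by
      rw [nonempty_compl]
      exact fun hc => hne hc
    obtain ⟨Y, hYU, hYne, hYD⟩ := key hreg h hUopen hUne
    have hYdisj : ∀ Z ∈ M, Disjoint Y Z := by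
      intro Z hZ
      rw [Set.disjoint_left]
      intro x hxY hxZ
      exact hYU hxY (subset_closure (mem_sUnion_of_mem hxZ hZ))
    have hYnotM : Y ∉ M := by
      intro hYM
      obtain ⟨y, hy⟩ := hYne
      exact Set.disjoint_left.mp (hYdisj Y hYM) hy hy
    have hins : insert Y M ∈ S := by
      constructor
      · rintro Z (rfl | hZ)
        · exact ⟨hYne, hYD⟩
        · exact hMS.1 Z hZ
      · haveI : Std.Symm (Disjoint : Set X → Set X → Prop) := ⟨fun a b (hab : Disjoint a b) => hab.symm⟩
        refine (Set.pairwise_insert_of_symm).mpr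
          ⟨hMS.2, fun Z hZ _ => hYdisj Z hZ⟩
    exact hYnotM (hM.2 hins (subset_insert Y M) (mem_insert Y M))
  -- choose the dense family on each member
  have hch : ∀ Y : M, ∃ D : μ.out → Set X, (∀ γ, D γ ⊆ (Y : Set X)) ∧
      (∀ γ, (Y : Set X) ⊆ closure (D γ)) ∧ Pairwise (Function.onFun Disjoint D) :=
    fun Y => (hMS.1 Y Y.2).2
  choose F hF1 hF2 hF3 using hch
  refine ⟨μ.out, fun γ => ⋃ Y : M, F Y γ, Cardinal.mk_out μ, ?_, ?_⟩
  · intro γ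
    rw [dense_iff_closure_eq]
    apply eq_univ_of_univ_subset
    rw [← hdense.closure_eq]
    have hsub : ⋃₀ (M : Set (Set X)) ⊆ closure (⋃ Y : M, F Y γ) := by
      rintro x ⟨Z, hZM, hxZ⟩
      refine closure_mono (subset_iUnion (fun Y : M => F Y γ) ⟨Z, hZM⟩) ?_
      exact hF2 ⟨Z, hZM⟩ γ hxZ
    exact (closure_minimal hsub isClosed_closure).trans le_rfl
  · intro γ δ hγδ
    rw [Function.onFun, Set.disjoint_left]
    intro x hxγ hxδ
    obtain ⟨Y, hxY⟩ := mem_iUnion.mp hxγ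
    obtain ⟨Z, hxZ⟩ := mem_iUnion.mp hxδ
    rcases eq_or_ne Y Z with rfl | hYZ
    · exact Set.disjoint_left.mp (hF3 Y hγδ) hxY hxZ
    · have hne : (Y : Set X) ≠ (Z : Set X) := fun hc => hYZ (Subtype.ext hc)
      exact Set.disjoint_left.mp (hMS.2 Y.2 Z.2 hne) (hF1 Y γ hxY) (hF1 Z δ hxZ)

/-- If `μ` is regular and every point of `X` is a `T_μ` point, then `X` is
`μ`-resolvable. -/
theorem stmt17 {X : Type u} [TopologicalSpace X] (μ : Cardinal.{u})
    (hreg : μ.IsRegular) (h : ∀ x : X, IsTPoint X μ x) :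
    Resolvable X μ := by
  exact stmt17_aux μ hreg h
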